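/- Let Λ be a density operator on A ⊗ B (finite-dimensional) and {F_i}_{i=1}^n a projective measurement on A. Suppose there is a POVM {G_i} on B with Σ_i Tr[(F_i ⊗ G_i) Λ] = 1 − δ. Then the pinching channel Φ(X) = Σ_i F_i X F_i applied to the marginal α = Tr_B Λ satisfies ‖α − Σ_i F_i α F_i‖₁ ≤ 2√δ + δ. -/

import Mathlib

open Matrix ComplexOrder Kronecker

/-- Partial trace over the second tensor factor. -/
noncomputable def ptraceRight {A B : Type*} [Fintype A] [Fintype B]
    (Λ : Matrix (A × B) (A × B) ℂ) : Matrix A A ℂ :=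
  Matrix.of fun i j => ∑ b, Λ (i, b) (j, b)

/-- Trace norm Tr√(MᴴM). -/
noncomputable def traceNorm {n : Type*} [Fintype n] [DecidableEq n]
    (M : Matrix n n ℂ) : ℝ :=
  (((Matrix.posSemidef_conjTranspose_mul_self M).1.eigenvectorUnitary.1 *
      diagonal (fun i => ((Real.sqrt ((Matrix.posSemidef_conjTranspose_mul_self M).1.eigenvalues i) : ℝ) : ℂ)) *
      (star (Matrix.posSemidef_conjTranspose_mul_self M).1.eigenvectorUnitary : Matrix n n ℂ)).trace).re

/-- Square root of a positive semidefinite matrix (spectral form). -/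
noncomputable def Matrix.PosSemidef.sqrt {n : Type*} [Fintype n] [DecidableEq n]
    {M : Matrix n n ℂ} (hM : M.PosSemidef) : Matrix n n ℂ :=
  hM.1.eigenvectorUnitary.1 * diagonal (fun i => ((Real.sqrt (hM.1.eigenvalues i) : ℝ) : ℂ)) *
    (star hM.1.eigenvectorUnitary : Matrix n n ℂ)

open scoped MatrixOrder in
lemma Matrix.PosSemidef.sqrt_eq_cfcSqrt {n : Type*} [Fintype n] [DecidableEq n]
    {M : Matrix n n ℂ} (hM : M.PosSemidef) : hM.sqrt = CFC.sqrt M := by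
  rw [CFC.sqrt_eq_cfc, cfc_nnreal_eq_real _ M, hM.1.cfc_eq, IsHermitian.cfc,
    Unitary.conjStarAlgAut_apply]
  unfold Matrix.PosSemidef.sqrt
  congr 2
  ext i j
  simp [diagonal_apply, Function.comp_def, max_eq_left (hM.eigenvalues_nonneg _)]

open scoped MatrixOrder in
lemma Matrix.PosSemidef.sqrt_mul_self {n : Type*} [Fintype n] [DecidableEq n]
    {M : Matrix n n ℂ} (hM : M.PosSemidef) : hM.sqrt * hM.sqrt = M := by
  rw [hM.sqrt_eq_cfcSqrt]
  exact CFC.sqrt_mul_sqrt_self M hM.nonneg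

open scoped MatrixOrder in
lemma Matrix.PosSemidef.posSemidef_sqrt {n : Type*} [Fintype n] [DecidableEq n]
    {M : Matrix n n ℂ} (hM : M.PosSemidef) : hM.sqrt.PosSemidef := by
  rw [hM.sqrt_eq_cfcSqrt]
  exact (CFC.sqrt_nonneg M).posSemidef

open scoped MatrixOrder in
lemma Matrix.PosSemidef.eq_sqrt_of_sq_eq {n : Type*} [Fintype n] [DecidableEq n]
    {N : Matrix n n ℂ} (hN : N.PosSemidef) {M : Matrix n n ℂ} (hM : M.PosSemidef)
    (h : N ^ 2 = M) : N = hM.sqrt := by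
  rw [hM.sqrt_eq_cfcSqrt]
  exact (CFC.sqrt_unique (by rw [← h, sq]) hN.nonneg).symm

namespace Stmt5Aux

section PT
set_option linter.unusedSectionVars false
variable {A B : Type*} [Fintype A] [DecidableEq A] [Fintype B] [DecidableEq B]

lemma ptr_kron_one_mul (F : Matrix A A ℂ) (M : Matrix (A × B) (A × B) ℂ) :
    ptraceRight ((F ⊗ₖ (1 : Matrix B B ℂ)) * M) = F * ptraceRight M := by
  ext i j
  simp only [ptraceRight, Matrix.of_apply, mul_apply, Fintype.sum_prod_type,
    kroneckerMap_apply, one_apply, mul_ite, mul_zero, ite_mul, zero_mul, mul_one,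
    Finset.sum_ite_eq, Finset.sum_ite_eq', Finset.mem_univ, if_true, Finset.mul_sum]
  rw [Finset.sum_comm]

lemma ptr_mul_kron_one (M : Matrix (A × B) (A × B) ℂ) (F : Matrix A A ℂ) :
    ptraceRight (M * (F ⊗ₖ (1 : Matrix B B ℂ))) = ptraceRight M * F := by
  ext i j
  simp only [ptraceRight, Matrix.of_apply, mul_apply, Fintype.sum_prod_type,
    kroneckerMap_apply, one_apply, mul_ite, mul_zero, ite_mul, zero_mul, mul_one,
    Finset.sum_ite_eq, Finset.sum_ite_eq', Finset.mem_univ, if_true, Finset.sum_mul]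
  rw [Finset.sum_comm]

lemma ptr_one_kron_mul (H : Matrix B B ℂ) (M : Matrix (A × B) (A × B) ℂ) :
    ptraceRight (((1 : Matrix A A ℂ) ⊗ₖ H) * M)
      = ptraceRight (M * ((1 : Matrix A A ℂ) ⊗ₖ H)) := by
  ext i j
  simp only [ptraceRight, Matrix.of_apply, mul_apply, Fintype.sum_prod_type,
    kroneckerMap_apply, one_apply, mul_ite, mul_zero, ite_mul, zero_mul, mul_one, one_mul,
    Finset.sum_ite_eq, Finset.sum_ite_eq', Finset.mem_univ, if_true]
  conv_lhs => enter [2, x]; rw [Finset.sum_comm]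
  conv_rhs => enter [2, x]; rw [Finset.sum_comm]
  simp only [Finset.sum_ite_eq, Finset.sum_ite_eq', Finset.mem_univ, if_true]
  rw [Finset.sum_comm]
  exact Finset.sum_congr rfl fun x _ => Finset.sum_congr rfl fun y _ => mul_comm _ _

lemma trace_mul_ptr (U : Matrix A A ℂ) (M : Matrix (A × B) (A × B) ℂ) :
    (U * ptraceRight M).trace = ((U ⊗ₖ (1 : Matrix B B ℂ)) * M).trace := by
  simp only [trace, diag_apply, mul_apply, ptraceRight, Matrix.of_apply, Fintype.sum_prod_type,
    kroneckerMap_apply, one_apply, mul_ite, mul_zero, ite_mul, zero_mul, mul_one,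
    Finset.sum_ite_eq, Finset.sum_ite_eq', Finset.mem_univ, if_true, Finset.mul_sum]
  conv_rhs => enter [2, x]; rw [Finset.sum_comm]

lemma ptr_conjT (M : Matrix (A × B) (A × B) ℂ) :
    (ptraceRight M)ᴴ = ptraceRight Mᴴ := by
  ext i j
  simp [ptraceRight, conjTranspose_apply]

lemma ptr_sub (M N : Matrix (A × B) (A × B) ℂ) :
    ptraceRight (M - N) = ptraceRight M - ptraceRight N := by
  ext i j
  simp [ptraceRight, Finset.sum_sub_distrib]

lemma ptr_sum {ι : Type*} [Fintype ι] (f : ι → Matrix (A × B) (A × B) ℂ) :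
    ptraceRight (∑ k, f k) = ∑ k, ptraceRight (f k) := by
  ext i j
  simp only [ptraceRight, Matrix.of_apply, Finset.sum_apply, Matrix.sum_apply]
  rw [Finset.sum_comm]

lemma kron_conjT (X : Matrix A A ℂ) (Y : Matrix B B ℂ) : (X ⊗ₖ Y)ᴴ = Xᴴ ⊗ₖ Yᴴ := by
  ext ⟨i, b⟩ ⟨j, c⟩
  simp [conjTranspose_apply, kroneckerMap_apply, mul_comm]

lemma one_kron_sum {ι : Type*} [Fintype ι] (G : ι → Matrix B B ℂ) :
    ∑ k, ((1 : Matrix A A ℂ) ⊗ₖ G k) = (1 : Matrix A A ℂ) ⊗ₖ (∑ k, G k) := by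
  ext ⟨i, b⟩ ⟨j, c⟩
  simp [Matrix.sum_apply, kroneckerMap_apply, Finset.mul_sum]

lemma sum_kron_one {ι : Type*} [Fintype ι] (F : ι → Matrix A A ℂ) :
    ∑ k, (F k ⊗ₖ (1 : Matrix B B ℂ)) = (∑ k, F k) ⊗ₖ (1 : Matrix B B ℂ) := by
  ext ⟨i, b⟩ ⟨j, c⟩
  simp [Matrix.sum_apply, kroneckerMap_apply, Finset.sum_mul]

lemma kron_sub_right (X : Matrix A A ℂ) (Y Z : Matrix B B ℂ) :
    X ⊗ₖ (Y - Z) = X ⊗ₖ Y - X ⊗ₖ Z := by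
  ext ⟨i, b⟩ ⟨j, c⟩
  simp [kroneckerMap_apply, mul_sub]

end PT

lemma psd_sum {n ι : Type*} [Fintype n] (s : Finset ι) (G : ι → Matrix n n ℂ)
    (hG : ∀ i, (G i).PosSemidef) : (∑ i ∈ s, G i).PosSemidef := by
  classical
  induction s using Finset.induction with
  | empty => simpa using Matrix.PosSemidef.zero
  | insert _ _ h ih => rw [Finset.sum_insert h]; exact (hG _).add ih

lemma trace_conjT_mul_re {n : Type*} [Fintype n] [DecidableEq n] (W : Matrix n n ℂ) :
    (Wᴴ * W).trace.re = ∑ j, ∑ i, ‖W i j‖ ^ 2 := by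
  simp only [trace, diag_apply, mul_apply, conjTranspose_apply]
  rw [Complex.re_sum]
  refine Finset.sum_congr rfl fun j _ => ?_
  rw [Complex.re_sum]
  refine Finset.sum_congr rfl fun i _ => ?_
  rw [Complex.sq_norm]
  simp [Complex.star_def, Complex.normSq_apply, Complex.mul_re]

lemma cs_trace {ι n : Type*} [Fintype ι] [Fintype n] [DecidableEq n] (W Y : ι → Matrix n n ℂ) :
    ‖∑ k, (W k * Y k).trace‖ ≤
      Real.sqrt (∑ k, ((W k)ᴴ * (W k)).trace.re) * Real.sqrt (∑ k, ((Y k)ᴴ * (Y k)).trace.re) := by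
  have h1 : ∀ k, (W k * Y k).trace = ∑ i, ∑ j, W k i j * Y k j i := by
    intro k; simp [trace, diag_apply, mul_apply]
  calc ‖∑ k, (W k * Y k).trace‖
      ≤ ∑ k, ∑ i, ∑ j, ‖W k i j‖ * ‖Y k j i‖ := by
        simp_rw [h1]
        refine (norm_sum_le _ _).trans ?_
        refine Finset.sum_le_sum fun k _ => (norm_sum_le _ _).trans ?_
        refine Finset.sum_le_sum fun i _ => (norm_sum_le _ _).trans ?_
        exact Finset.sum_le_sum fun j _ => le_of_eq (norm_mul _ _)
    _ = ∑ p : ι × n × n, ‖W p.1 p.2.1 p.2.2‖ * ‖Y p.1 p.2.2 p.2.1‖ := by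
        rw [Fintype.sum_prod_type]
        exact Finset.sum_congr rfl fun k _ => by rw [Fintype.sum_prod_type]
    _ ≤ Real.sqrt (∑ p : ι × n × n, ‖W p.1 p.2.1 p.2.2‖ ^ 2) *
        Real.sqrt (∑ p : ι × n × n, ‖Y p.1 p.2.2 p.2.1‖ ^ 2) :=
        Real.sum_mul_le_sqrt_mul_sqrt _ _ _
    _ = Real.sqrt (∑ k, ((W k)ᴴ * (W k)).trace.re) * Real.sqrt (∑ k, ((Y k)ᴴ * (Y k)).trace.re) := by
        congr 1
        · congr 1
          rw [Fintype.sum_prod_type]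
          refine Finset.sum_congr rfl fun k _ => ?_
          rw [trace_conjT_mul_re, Fintype.sum_prod_type]
          rw [Finset.sum_comm]
        · congr 1
          rw [Fintype.sum_prod_type]
          refine Finset.sum_congr rfl fun k _ => ?_
          rw [trace_conjT_mul_re, Fintype.sum_prod_type]

lemma traceNorm_herm_dual {n : Type*} [Fintype n] [DecidableEq n]
    (T : Matrix n n ℂ) (hT : T.IsHermitian) :
    ∃ U : Matrix n n ℂ, Uᴴ * U = 1 ∧ traceNorm T = ((U * T).trace).re := by
  set V : Matrix n n ℂ := (hT.eigenvectorUnitary : Matrix n n ℂ) with hVdef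
  have hV1 : Vᴴ * V = 1 := by
    simpa [star_eq_conjTranspose] using mem_unitaryGroup_iff'.mp hT.eigenvectorUnitary.2
  have hV2 : V * Vᴴ = 1 := by
    simpa [star_eq_conjTranspose] using mem_unitaryGroup_iff.mp hT.eigenvectorUnitary.2
  set lam : n → ℝ := hT.eigenvalues with hlam
  have key : ∀ f g : n → ℝ,
      (V * diagonal (fun k => (f k : ℂ)) * Vᴴ) * (V * diagonal (fun k => (g k : ℂ)) * Vᴴ)
        = V * diagonal (fun k => ((f k * g k : ℝ) : ℂ)) * Vᴴ := by
    intro f g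
    calc (V * diagonal (fun k => (f k : ℂ)) * Vᴴ) * (V * diagonal (fun k => (g k : ℂ)) * Vᴴ)
        = V * diagonal (fun k => (f k : ℂ)) * (Vᴴ * V) * diagonal (fun k => (g k : ℂ)) * Vᴴ := by
          simp only [Matrix.mul_assoc]
      _ = V * (diagonal (fun k => (f k : ℂ)) * diagonal (fun k => (g k : ℂ))) * Vᴴ := by
          rw [hV1]; simp only [Matrix.mul_one, Matrix.mul_assoc]
      _ = V * diagonal (fun k => ((f k * g k : ℝ) : ℂ)) * Vᴴ := by
          rw [diagonal_mul_diagonal]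
          congr 1
          · congr 1; ext k; push_cast; ring
  have hspec : T = V * diagonal (fun k => ((lam k : ℝ) : ℂ)) * Vᴴ := by
    simpa [star_eq_conjTranspose, Function.comp_def] using hT.spectral_theorem
  set s : n → ℝ := fun k => if lam k < 0 then (-1 : ℝ) else 1 with hs
  have hss : ∀ k, s k * s k = 1 := by
    intro k; by_cases h : lam k < 0 <;> simp [hs, h]
  have hsl : ∀ k, s k * lam k = |lam k| := by
    intro k
    by_cases h : lam k < 0
    · simp [hs, h, abs_of_neg h]
    · simp [hs, h, abs_of_nonneg (not_lt.mp h)]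
  refine ⟨V * diagonal (fun k => (s k : ℂ)) * Vᴴ, ?_, ?_⟩
  · have hDstar : (diagonal fun k => (s k : ℂ))ᴴ = diagonal (fun k => (s k : ℂ)) := by
      have hstar : (star fun k => ((s k : ℝ) : ℂ)) = fun k => ((s k : ℝ) : ℂ) :=
        funext fun k => by
          show star ((s k : ℝ) : ℂ) = ((s k : ℝ) : ℂ)
          rw [Complex.star_def, Complex.conj_ofReal]
      rw [diagonal_conjTranspose, hstar]
    have hherm : (V * diagonal (fun k => (s k : ℂ)) * Vᴴ)ᴴ
        = V * diagonal (fun k => (s k : ℂ)) * Vᴴ := by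
      rw [conjTranspose_mul, conjTranspose_mul, conjTranspose_conjTranspose, hDstar,
        Matrix.mul_assoc]
    rw [hherm, key]
    simp only [hss]
    simp [diagonal_one, hV2]
  · have hUT : (V * diagonal (fun k => (s k : ℂ)) * Vᴴ) * T
        = V * diagonal (fun k => ((|lam k| : ℝ) : ℂ)) * Vᴴ := by
      rw [hspec, key]
      simp only [hsl]
    have hN : (V * diagonal (fun k => ((|lam k| : ℝ) : ℂ)) * Vᴴ).PosSemidef := by
      refine PosSemidef.mul_mul_conjTranspose_same ?_ V
      refine posSemidef_diagonal_iff.mpr fun k => ?_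
      rw [RCLike.nonneg_iff]
      simp [abs_nonneg]
    have hN2 : (V * diagonal (fun k => ((|lam k| : ℝ) : ℂ)) * Vᴴ) ^ 2 = Tᴴ * T := by
      rw [pow_two, key, hT.eq]
      conv_rhs => rw [hspec]
      rw [key, show (fun k => ((|lam k| * |lam k| : ℝ) : ℂ)) = fun k => ((lam k * lam k : ℝ) : ℂ)
        from funext fun k => by rw [abs_mul_abs_self]]
    have hsqrt : (V * diagonal (fun k => ((|lam k| : ℝ) : ℂ)) * Vᴴ)
        = (Matrix.posSemidef_conjTranspose_mul_self T).sqrt :=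
      hN.eq_sqrt_of_sq_eq _ hN2
    have htrN : ∀ f : n → ℝ, (V * diagonal (fun k => ((f k : ℝ) : ℂ)) * Vᴴ).trace
        = ((∑ k, f k : ℝ) : ℂ) := by
      intro f
      rw [trace_mul_cycle, hV1, Matrix.one_mul, trace_diagonal]
      push_cast; rfl
    rw [show traceNorm T = ((Matrix.posSemidef_conjTranspose_mul_self T).sqrt.trace).re from rfl,
      ← hsqrt, hUT, htrN]

end Stmt5Aux

open Stmt5Aux

/-- if the projective measurement {F_i} on A of a bipartite density
operator Λ is guessed with probability 1 − δ by a POVM {G_i} on B, then the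
pinching of the marginal α = Tr_B Λ moves it by at most 2√δ + δ in trace norm. -/
theorem stmt5 {A B ι : Type*} [Fintype A] [DecidableEq A] [Fintype B] [DecidableEq B]
    [Fintype ι]
    (Λ : Matrix (A × B) (A × B) ℂ) (hΛ : Λ.PosSemidef) (htr : Λ.trace = 1)
    (F : ι → Matrix A A ℂ) (G : ι → Matrix B B ℂ) (δ : ℝ) (hδ0 : 0 ≤ δ)
    (hFh : ∀ i, (F i).IsHermitian) (hF2 : ∀ i, F i * F i = F i)
    (hForth : ∀ i j, i ≠ j → F i * F j = 0) (hFsum : ∑ i, F i = 1)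
    (hG : ∀ i, (G i).PosSemidef) (hGsum : ∑ i, G i = 1)
    (hguess : (∑ i, ((F i ⊗ₖ G i) * Λ).trace).re = 1 - δ) :
    traceNorm (ptraceRight Λ - ∑ i, F i * ptraceRight Λ * F i) ≤ 2 * Real.sqrt δ + δ := by
  classical
  -- square roots
  have hG1 : ∀ k, (1 - G k).PosSemidef := by
    intro k
    have : ∑ j ∈ Finset.univ.erase k, G j = 1 - G k := by
      have h := Finset.sum_erase_add Finset.univ G (Finset.mem_univ k)
      rw [hGsum] at h
      linear_combination (norm := module) h
    rw [← this]
    exact psd_sum _ _ hG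
  set S : Matrix (A × B) (A × B) ℂ := hΛ.sqrt with hSdef
  have hSh : Sᴴ = S := hΛ.posSemidef_sqrt.1
  have hSS : S * S = Λ := hΛ.sqrt_mul_self
  set Q : ι → Matrix (A × B) (A × B) ℂ := fun k => F k ⊗ₖ (1 : Matrix B B ℂ) with hQdef
  set g : ι → Matrix (A × B) (A × B) ℂ := fun k => (1 : Matrix A A ℂ) ⊗ₖ (hG k).sqrt with hgdef
  set h : ι → Matrix (A × B) (A × B) ℂ := fun k => (1 : Matrix A A ℂ) ⊗ₖ (hG1 k).sqrt with hhdef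
  -- basic algebra
  have hgg : ∀ k, g k * g k = (1 : Matrix A A ℂ) ⊗ₖ G k := by
    intro k
    rw [hgdef]
    simp only
    rw [← mul_kronecker_mul, Matrix.one_mul, (hG k).sqrt_mul_self]
  have hhh : ∀ k, h k * h k = (1 : Matrix A A ℂ) ⊗ₖ (1 - G k) := by
    intro k
    rw [hhdef]
    simp only
    rw [← mul_kronecker_mul, Matrix.one_mul, (hG1 k).sqrt_mul_self]
  have hQQ : ∀ k, Q k * Q k = Q k := by
    intro k
    rw [hQdef]
    simp only
    rw [← mul_kronecker_mul, Matrix.one_mul, hF2]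
  have hQg : ∀ k, Q k * g k = g k * Q k := by
    intro k
    rw [hQdef, hgdef]
    simp only
    rw [← mul_kronecker_mul, ← mul_kronecker_mul, Matrix.one_mul, Matrix.mul_one,
      Matrix.one_mul, Matrix.mul_one]
  have hQh : ∀ k, Q k * h k = h k * Q k := by
    intro k
    rw [hQdef, hhdef]
    simp only
    rw [← mul_kronecker_mul, ← mul_kronecker_mul, Matrix.one_mul, Matrix.mul_one,
      Matrix.one_mul, Matrix.mul_one]
  have hQG : ∀ k, Q k * ((1 : Matrix A A ℂ) ⊗ₖ G k) = F k ⊗ₖ G k := by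
    intro k
    rw [hQdef]
    simp only
    rw [← mul_kronecker_mul, Matrix.mul_one, Matrix.one_mul]
  have hQ1G : ∀ k, Q k * ((1 : Matrix A A ℂ) ⊗ₖ (1 - G k)) = F k ⊗ₖ (1 : Matrix B B ℂ) - F k ⊗ₖ G k := by
    intro k
    rw [hQdef]
    simp only
    rw [← mul_kronecker_mul, Matrix.mul_one, Matrix.one_mul, kron_sub_right]
  have hQH : ∀ k, (Q k)ᴴ = Q k := by
    intro k
    rw [hQdef]
    simp only
    rw [kron_conjT, (hFh k).eq, conjTranspose_one]
  have hgH : ∀ k, (g k)ᴴ = g k := by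
    intro k
    rw [hgdef]
    simp only
    rw [kron_conjT, (hG k).posSemidef_sqrt.1.eq, conjTranspose_one]
  have hhH : ∀ k, (h k)ᴴ = h k := by
    intro k
    rw [hhdef]
    simp only
    rw [kron_conjT, (hG1 k).posSemidef_sqrt.1.eq, conjTranspose_one]
  -- the five families
  set Ak : ι → Matrix (A × B) (A × B) ℂ := fun k => ((1 - Q k) * g k) * S with hAdef
  set Bk : ι → Matrix (A × B) (A × B) ℂ := fun k => S * g k with hBdef
  set Ck : ι → Matrix (A × B) (A × B) ℂ := fun k => (Q k * g k) * S with hCdef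
  set Dk : ι → Matrix (A × B) (A × B) ℂ := fun k => S * (g k * (1 - Q k)) with hDdef
  set Ek : ι → Matrix (A × B) (A × B) ℂ := fun k => (Q k * h k) * S with hEdef

  -- trace reduction helpers
  have htr_left : ∀ Y Z : Matrix (A × B) (A × B) ℂ,
      ((Y * S)ᴴ * (Z * S)).trace = ((Yᴴ * Z) * Λ).trace := by
    intro Y Z
    rw [conjTranspose_mul, hSh]
    calc (S * Yᴴ * (Z * S)).trace = ((Z * S) * (S * Yᴴ)).trace := by
          rw [trace_mul_comm]
      _ = ((Yᴴ * Z) * Λ).trace := by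
          rw [show (Z * S) * (S * Yᴴ) = Z * Λ * Yᴴ by
            rw [Matrix.mul_assoc Z S, ← Matrix.mul_assoc S S, hSS, ← Matrix.mul_assoc]]
          rw [trace_mul_cycle]
  have htr_right : ∀ Y Z : Matrix (A × B) (A × B) ℂ,
      ((S * Y)ᴴ * (S * Z)).trace = ((Z * Yᴴ) * Λ).trace := by
    intro Y Z
    rw [conjTranspose_mul, hSh]
    rw [show (Yᴴ * S) * (S * Z) = Yᴴ * (Λ * Z) by
      rw [Matrix.mul_assoc, ← Matrix.mul_assoc S S, hSS]]
    rw [trace_mul_comm (Yᴴ) (Λ * Z), Matrix.mul_assoc, trace_mul_comm Λ (Z * Yᴴ)]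
  -- marginals
  set alph : Matrix A A ℂ := ptraceRight Λ with halphdef
  set m : ι → Matrix A A ℂ := fun k => ptraceRight (Λ * ((1 : Matrix A A ℂ) ⊗ₖ G k)) with hmdef
  have hptr_g : ∀ k, ptraceRight (g k * (Λ * g k)) = m k := by
    intro k
    rw [hmdef, hgdef]
    simp only
    rw [ptr_one_kron_mul, Matrix.mul_assoc, ← mul_kronecker_mul, Matrix.one_mul,
      (hG k).sqrt_mul_self]
  have hptr_h : ∀ k, ptraceRight (h k * (Λ * h k)) = alph - m k := by
    intro k
    rw [hmdef, hhdef, halphdef]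
    simp only
    rw [ptr_one_kron_mul, Matrix.mul_assoc, ← mul_kronecker_mul, Matrix.one_mul,
      (hG1 k).sqrt_mul_self, kron_sub_right, Matrix.mul_sub, ptr_sub, one_kronecker_one,
      Matrix.mul_one]
  have hsumm : ∑ k, m k = alph := by
    rw [hmdef, halphdef]
    simp only
    rw [← ptr_sum, ← Finset.mul_sum, one_kron_sum, hGsum, one_kronecker_one, Matrix.mul_one]
  -- the three claims
  have hAB : ∀ k, Ak k * Bk k = (1 - Q k) * (g k * (Λ * g k)) := by
    intro k
    rw [hAdef, hBdef]
    simp only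
    simp only [← Matrix.mul_assoc]
    rw [Matrix.mul_assoc ((1 - Q k) * g k) S S, hSS]
  have hCD : ∀ k, Ck k * Dk k = (Q k * (g k * (Λ * g k))) * (1 - Q k) := by
    intro k
    rw [hCdef, hDdef]
    simp only
    simp only [← Matrix.mul_assoc]
    rw [Matrix.mul_assoc (Q k * g k) S S, hSS]
  have hEEH : ∀ k, Ek k * (Ek k)ᴴ = (Q k * (h k * (Λ * h k))) * Q k := by
    intro k
    rw [hEdef]
    simp only
    rw [conjTranspose_mul, conjTranspose_mul, hSh, hhH, hQH]
    simp only [← Matrix.mul_assoc]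
    rw [Matrix.mul_assoc (Q k * h k) S S, hSS]
  have claim1 : ∀ k, ptraceRight (Ak k * Bk k) = m k - F k * m k := by
    intro k
    rw [hAB k, sub_mul, Matrix.one_mul, ptr_sub, hQdef]
    simp only
    rw [ptr_kron_one_mul, hptr_g]
  have claim2 : ∀ k, ptraceRight (Ck k * Dk k) = F k * m k - (F k * m k) * F k := by
    intro k
    rw [hCD k, mul_sub, Matrix.mul_one, ptr_sub, hQdef]
    simp only
    rw [ptr_kron_one_mul, ptr_mul_kron_one, ptr_kron_one_mul, hptr_g]
  have claim3 : ∀ k, ptraceRight (Ek k * (Ek k)ᴴ) = F k * alph * F k - (F k * m k) * F k := by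
    intro k
    rw [hEEH k, hQdef]
    simp only
    rw [ptr_mul_kron_one, ptr_kron_one_mul, hptr_h, Matrix.mul_sub, Matrix.sub_mul]
  -- the main identity
  have hTid : alph - ∑ i, F i * alph * F i
      = ∑ k, ptraceRight (Ak k * Bk k) + ∑ k, ptraceRight (Ck k * Dk k)
        - ∑ k, ptraceRight (Ek k * (Ek k)ᴴ) := by
    simp only [claim1, claim2, claim3]
    rw [Finset.sum_sub_distrib, Finset.sum_sub_distrib, Finset.sum_sub_distrib, hsumm]
    abel
  -- Hermitian
  have halphaH : alphᴴ = alph := by rw [halphdef, ptr_conjT, hΛ.1.eq]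
  have hTh : (alph - ∑ i, F i * alph * F i).IsHermitian := by
    have hsH : (∑ i, F i * alph * F i)ᴴ = ∑ i, F i * alph * F i := by
      rw [conjTranspose_sum]
      refine Finset.sum_congr rfl fun i _ => ?_
      rw [conjTranspose_mul, conjTranspose_mul, halphaH, (hFh i).eq,
        Matrix.mul_assoc (F i) alph (F i)]
    show (alph - ∑ i, F i * alph * F i)ᴴ = _
    rw [conjTranspose_sub, halphaH, hsH]
  -- duality
  obtain ⟨U, hU, htn⟩ := traceNorm_herm_dual _ hTh
  have hUkron : ((U ⊗ₖ (1 : Matrix B B ℂ))ᴴ) * (U ⊗ₖ (1 : Matrix B B ℂ)) = 1 := by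
    rw [kron_conjT, conjTranspose_one, ← mul_kronecker_mul, hU, Matrix.one_mul,
      one_kronecker_one]
  have hWcancel : ∀ X : Matrix (A × B) (A × B) ℂ,
      (((U ⊗ₖ (1 : Matrix B B ℂ)) * X)ᴴ * ((U ⊗ₖ (1 : Matrix B B ℂ)) * X)).trace
        = (Xᴴ * X).trace := by
    intro X
    rw [conjTranspose_mul, Matrix.mul_assoc,
      ← Matrix.mul_assoc ((U ⊗ₖ (1 : Matrix B B ℂ))ᴴ), hUkron, Matrix.one_mul]
  -- trace decomposition
  have htrace_id : (U * (alph - ∑ i, F i * alph * F i)).trace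
      = ∑ k, (((U ⊗ₖ (1 : Matrix B B ℂ)) * Ak k) * Bk k).trace
        + ∑ k, (((U ⊗ₖ (1 : Matrix B B ℂ)) * Ck k) * Dk k).trace
        - ∑ k, (((U ⊗ₖ (1 : Matrix B B ℂ)) * Ek k) * (Ek k)ᴴ).trace := by
    rw [hTid, Matrix.mul_sub, Matrix.mul_add, trace_sub, trace_add]
    congr 1
    · congr 1
      · rw [Finset.mul_sum, trace_sum]
        refine Finset.sum_congr rfl fun k _ => ?_
        rw [trace_mul_ptr, ← Matrix.mul_assoc]
      · rw [Finset.mul_sum, trace_sum]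
        refine Finset.sum_congr rfl fun k _ => ?_
        rw [trace_mul_ptr, ← Matrix.mul_assoc]
    · rw [Finset.mul_sum, trace_sum]
      refine Finset.sum_congr rfl fun k _ => ?_
      rw [trace_mul_ptr, ← Matrix.mul_assoc]
  -- scalar traces
  set t1 : ι → ℂ := fun k => (((1 : Matrix A A ℂ) ⊗ₖ G k) * Λ).trace with ht1def
  set t2 : ι → ℂ := fun k => ((F k ⊗ₖ G k) * Λ).trace with ht2def
  set pp : ι → ℂ := fun k => ((F k ⊗ₖ (1 : Matrix B B ℂ)) * Λ).trace with hppdef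
  have hsq : ∀ k, (1 - Q k) * (1 - Q k) = 1 - Q k := by
    intro k
    rw [sub_mul, Matrix.one_mul, mul_sub, Matrix.mul_one, hQQ]
    abel
  have hkeyA : ∀ k, ((1 - Q k) * g k)ᴴ * ((1 - Q k) * g k)
      = (1 : Matrix A A ℂ) ⊗ₖ G k - F k ⊗ₖ G k := by
    intro k
    rw [conjTranspose_mul, hgH, conjTranspose_sub, conjTranspose_one, hQH]
    calc g k * (1 - Q k) * ((1 - Q k) * g k)
        = g k * ((1 - Q k) * (1 - Q k)) * g k := by
          rw [Matrix.mul_assoc (g k), ← Matrix.mul_assoc (1 - Q k), Matrix.mul_assoc (g k),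
            Matrix.mul_assoc (1 - Q k)]
      _ = g k * (1 - Q k) * g k := by rw [hsq]
      _ = (1 : Matrix A A ℂ) ⊗ₖ G k - F k ⊗ₖ G k := by
          rw [mul_sub, Matrix.mul_one, sub_mul, ← hQg, Matrix.mul_assoc, hgg, hQG]
  have htrA : ∀ k, ((Ak k)ᴴ * Ak k).trace = t1 k - t2 k := by
    intro k
    rw [hAdef]
    simp only
    rw [htr_left, hkeyA, sub_mul, trace_sub]
  have htrB : ∀ k, ((Bk k)ᴴ * Bk k).trace = t1 k := by
    intro k
    rw [hBdef]
    simp only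
    rw [htr_right, hgH, hgg]
  have htrC : ∀ k, ((Ck k)ᴴ * Ck k).trace = t2 k := by
    intro k
    rw [hCdef]
    simp only
    rw [htr_left]
    rw [show (Q k * g k)ᴴ * (Q k * g k) = F k ⊗ₖ G k by
      rw [conjTranspose_mul, hgH, hQH, Matrix.mul_assoc, ← Matrix.mul_assoc (Q k) (Q k), hQQ,
        ← Matrix.mul_assoc, ← hQg, Matrix.mul_assoc, hgg, hQG]]
  have htrD : ∀ k, ((Dk k)ᴴ * Dk k).trace = t1 k - t2 k := by
    intro k
    rw [hDdef]
    simp only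
    rw [htr_right]
    rw [show (g k * (1 - Q k)) * (g k * (1 - Q k))ᴴ
        = (1 : Matrix A A ℂ) ⊗ₖ G k - F k ⊗ₖ G k by
      rw [conjTranspose_mul, hgH, conjTranspose_sub, conjTranspose_one, hQH,
        ← Matrix.mul_assoc]
      exact hkeyA k ▸ by
        rw [conjTranspose_mul, hgH, conjTranspose_sub, conjTranspose_one, hQH,
          ← Matrix.mul_assoc]]
    rw [sub_mul, trace_sub]
  have htrE : ∀ k, ((Ek k)ᴴ * Ek k).trace = pp k - t2 k := by
    intro k
    rw [hEdef]
    simp only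
    rw [htr_left]
    rw [show (Q k * h k)ᴴ * (Q k * h k) = F k ⊗ₖ (1 : Matrix B B ℂ) - F k ⊗ₖ G k by
      rw [conjTranspose_mul, hhH, hQH, Matrix.mul_assoc, ← Matrix.mul_assoc (Q k) (Q k), hQQ,
        ← Matrix.mul_assoc, ← hQh, Matrix.mul_assoc, hhh, hQ1G]]
    rw [sub_mul, trace_sub]
  have htrE2 : ∀ k, (((Ek k)ᴴ)ᴴ * (Ek k)ᴴ).trace = pp k - t2 k := by
    intro k
    rw [conjTranspose_conjTranspose, trace_mul_comm, htrE]
  -- scalar sums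
  have hsumt1 : ∑ k, t1 k = 1 := by
    rw [ht1def]
    simp only
    rw [← trace_sum, ← Finset.sum_mul, one_kron_sum, hGsum, one_kronecker_one, Matrix.one_mul,
      htr]
  have hsumpp : ∑ k, pp k = 1 := by
    rw [hppdef]
    simp only
    rw [← trace_sum, ← Finset.sum_mul, sum_kron_one, hFsum, one_kronecker_one, Matrix.one_mul,
      htr]
  have hguess2 : (∑ k, t2 k).re = 1 - δ := hguess
  have hsumA : ∑ k, ((Ak k)ᴴ * Ak k).trace.re = δ := by
    have e : ∑ k, ((Ak k)ᴴ * Ak k).trace = ∑ k, t1 k - ∑ k, t2 k := by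
      simp only [htrA]
      rw [Finset.sum_sub_distrib]
    rw [← Complex.re_sum, e, Complex.sub_re, hsumt1, hguess2]
    norm_num
  have hsumB : ∑ k, ((Bk k)ᴴ * Bk k).trace.re = 1 := by
    have e : ∑ k, ((Bk k)ᴴ * Bk k).trace = ∑ k, t1 k := by simp only [htrB]
    rw [← Complex.re_sum, e, hsumt1]
    norm_num
  have hsumC : ∑ k, ((Ck k)ᴴ * Ck k).trace.re = 1 - δ := by
    have e : ∑ k, ((Ck k)ᴴ * Ck k).trace = ∑ k, t2 k := by simp only [htrC]
    rw [← Complex.re_sum, e, hguess2]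
  have hsumD : ∑ k, ((Dk k)ᴴ * Dk k).trace.re = δ := by
    have e : ∑ k, ((Dk k)ᴴ * Dk k).trace = ∑ k, t1 k - ∑ k, t2 k := by
      simp only [htrD]
      rw [Finset.sum_sub_distrib]
    rw [← Complex.re_sum, e, Complex.sub_re, hsumt1, hguess2]
    norm_num
  have hsumE : ∑ k, ((Ek k)ᴴ * Ek k).trace.re = δ := by
    have e : ∑ k, ((Ek k)ᴴ * Ek k).trace = ∑ k, pp k - ∑ k, t2 k := by
      simp only [htrE]
      rw [Finset.sum_sub_distrib]
    rw [← Complex.re_sum, e, Complex.sub_re, hsumpp, hguess2]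
    norm_num
  have hsumE2 : ∑ k, (((Ek k)ᴴ)ᴴ * (Ek k)ᴴ).trace.re = δ := by
    have e : ∑ k, (((Ek k)ᴴ)ᴴ * (Ek k)ᴴ).trace = ∑ k, pp k - ∑ k, t2 k := by
      simp only [htrE2]
      rw [Finset.sum_sub_distrib]
    rw [← Complex.re_sum, e, Complex.sub_re, hsumpp, hguess2]
    norm_num
  -- Cauchy-Schwarz bounds
  have h1 := cs_trace (fun k => (U ⊗ₖ (1 : Matrix B B ℂ)) * Ak k) Bk
  have h2 := cs_trace (fun k => (U ⊗ₖ (1 : Matrix B B ℂ)) * Ck k) Dk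
  have h3 := cs_trace (fun k => (U ⊗ₖ (1 : Matrix B B ℂ)) * Ek k) (fun k => (Ek k)ᴴ)
  simp only [hWcancel] at h1 h2 h3
  rw [hsumA, hsumB, hsumC, hsumD, hsumE, hsumE2] at *
  rw [Real.sqrt_one, mul_one] at h1
  have h2' : ‖∑ k, (((U ⊗ₖ (1 : Matrix B B ℂ)) * Ck k) * Dk k).trace‖
      ≤ Real.sqrt δ := by
    refine h2.trans ?_
    calc Real.sqrt (1 - δ) * Real.sqrt δ ≤ 1 * Real.sqrt δ := by
          refine mul_le_mul_of_nonneg_right ?_ (Real.sqrt_nonneg _)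
          exact Real.sqrt_le_one.mpr (by linarith)
      _ = Real.sqrt δ := one_mul _
  have h3' : ‖∑ k, (((U ⊗ₖ (1 : Matrix B B ℂ)) * Ek k) * (Ek k)ᴴ).trace‖
      ≤ δ := by
    refine h3.trans ?_
    rw [Real.mul_self_sqrt hδ0]
  -- finish
  rw [htn, htrace_id, Complex.sub_re, Complex.add_re]
  have e1 : (∑ k, (((U ⊗ₖ (1 : Matrix B B ℂ)) * Ak k) * Bk k).trace).re ≤ Real.sqrt δ :=
    (Complex.re_le_norm _).trans h1
  have e2 : (∑ k, (((U ⊗ₖ (1 : Matrix B B ℂ)) * Ck k) * Dk k).trace).re ≤ Real.sqrt δ :=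
    (Complex.re_le_norm _).trans h2'
  have e3 : -(∑ k, (((U ⊗ₖ (1 : Matrix B B ℂ)) * Ek k) * (Ek k)ᴴ).trace).re ≤ δ := by
    refine le_trans ?_ h3'
    exact (neg_le_abs _).trans (Complex.abs_re_le_norm _)
  linarith
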